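/- Let (T,η,μ) be a monad on a category C that has kernel pairs and reflexive coequalisers, and suppose T preserves reflexive coequalisers. Then every language L : TI → O that is accepted by a minimal T-automaton has a Nerode equivalence; indeed, the kernel pair p₁, p₂ : K → TI of the reachability map of the minimal automaton is the Nerode equivalence of L. -/

import Mathlib

open CategoryTheory CategoryTheory.Limits

universe v u

namespace TreeAutPaper

variable {C : Type u} [Category.{v} C]

/-- The adjoint transpose `f♯ : FX ⟶ Y` of `f : X ⟶ UY` for the free–forgetful
adjunction of the Eilenberg–Moore category of a monad. -/
def transpose (T : Monad C) {X : C} {Y : T.Algebra} (f : X ⟶ Y.A) : T.free.obj X ⟶ Y :=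
  ((Monad.adj T).homEquiv X Y).symm f

/-- `T` maps reflexive coequalisers to epimorphisms. -/
def MapsReflexiveCoequalizersToEpis (S : C ⥤ C) : Prop :=
  ∀ {A B X : C} (f g : A ⟶ B) (c : B ⟶ X) (w : f ≫ c = g ≫ c),
    IsReflexivePair f g → Nonempty (IsColimit (Cofork.ofπ c w)) → Epi (S.map c)

/-- `S` preserves reflexive coequalisers. -/
def PreservesReflexiveCoequalizersProp (S : C ⥤ C) : Prop :=
  ∀ {A B X : C} (f g : A ⟶ B) (c : B ⟶ X) (w : f ≫ c = g ≫ c),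
    IsReflexivePair f g → Nonempty (IsColimit (Cofork.ofπ c w)) →
      Nonempty (IsColimit (Cofork.ofπ (S.map c)
        (show S.map f ≫ S.map c = S.map g ≫ S.map c by
          rw [← S.map_comp, ← S.map_comp, w])))

/-- `(R, p₁, p₂)` is the Nerode equivalence of the language `L : TI ⟶ O`. -/
def IsNerode (T : Monad C) {I O : C} (L : (T : C ⥤ C).obj I ⟶ O)
    (R : C) (p₁ p₂ : R ⟶ (T : C ⥤ C).obj I) : Prop :=
  ((T : C ⥤ C).map p₁ ≫ T.μ.app I ≫ L = (T : C ⥤ C).map p₂ ≫ T.μ.app I ≫ L) ∧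
    ∀ (S : C) (q₁ q₂ : S ⟶ (T : C ⥤ C).obj I), IsReflexivePair q₁ q₂ →
      (T : C ⥤ C).map q₁ ≫ T.μ.app I ≫ L = (T : C ⥤ C).map q₂ ≫ T.μ.app I ≫ L →
      ∃! u : S ⟶ R, u ≫ p₁ = q₁ ∧ u ≫ p₂ = q₂

variable (T : Monad C)

/-- A `T`-automaton: an Eilenberg–Moore algebra together with initial and final
state morphisms. -/
structure TAut (I O : C) where
  Q : T.Algebra
  i : I ⟶ Q.A
  o : Q.A ⟶ O

variable {T} {I O : C}

/-- The reachability map of a `T`-automaton. -/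
def TAut.rch (A : TAut T I O) : (T : C ⥤ C).obj I ⟶ A.Q.A :=
  (transpose T A.i).f

/-- The language of a `T`-automaton. -/
def TAut.lang (A : TAut T I O) : (T : C ⥤ C).obj I ⟶ O :=
  A.rch ≫ A.o

/-- `h` is a homomorphism of `T`-automata from `A` to `B`. -/
structure IsTAutHom (A B : TAut T I O) (h : A.Q.A ⟶ B.Q.A) : Prop where
  alg : (T : C ⥤ C).map h ≫ B.Q.a = A.Q.a ≫ h
  hi : A.i ≫ h = B.i
  ho : h ≫ B.o = A.o

/-- A `T`-automaton is reachable if its reachability map is a reflexive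
regular epimorphism, i.e. a coequaliser of a reflexive pair. -/
def TAut.Reachable (A : TAut T I O) : Prop :=
  ∃ (S : C) (q₁ q₂ : S ⟶ (T : C ⥤ C).obj I),
    IsReflexivePair q₁ q₂ ∧
      ∃ w : q₁ ≫ A.rch = q₂ ≫ A.rch, Nonempty (IsColimit (Cofork.ofπ A.rch w))

/-- A `T`-automaton is minimal if it is reachable and every reachable `T`-automaton
with the same language admits a (necessarily unique) homomorphism into it. -/
def TAut.Minimal (A : TAut T I O) : Prop :=
  A.Reachable ∧ ∀ B : TAut T I O, B.Reachable → B.lang = A.lang →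
    ∃! h : B.Q.A ⟶ A.Q.A, IsTAutHom B A h


-- auxiliary lemmas

lemma rch_eq (A : TAut T I O) : A.rch = (T : C ⥤ C).map A.i ≫ A.Q.a := by
  simp [TAut.rch, transpose, Monad.adj, Adjunction.homEquiv]
  change (T : C ⥤ C).map A.i ≫ 𝟙 _ ≫ A.Q.a = _
  rw [Category.id_comp]

lemma rch_alg (A : TAut T I O) :
    (T : C ⥤ C).map A.rch ≫ A.Q.a = T.μ.app I ≫ A.rch := by
  rw [rch_eq, Functor.map_comp, Category.assoc, ← A.Q.assoc, ← Category.assoc]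
  have nat := T.μ.naturality A.i
  simp only [Functor.comp_map] at nat
  rw [nat, Category.assoc]

/-- Key lemma: any reflexive pair merged by the language of a minimal automaton
is merged by its reachability map. -/
lemma key {C : Type u} [Category.{v} C] [HasReflexiveCoequalizers C]
    {T : Monad C} (hT : PreservesReflexiveCoequalizersProp (T : C ⥤ C))
    {I O : C} {L : (T : C ⥤ C).obj I ⟶ O}
    (A : TAut T I O) (hA : A.Minimal) (hL : A.lang = L)
    {S : C} (q₁ q₂ : S ⟶ (T : C ⥤ C).obj I) (hq : IsReflexivePair q₁ q₂)
    (hLq : (T : C ⥤ C).map q₁ ≫ T.μ.app I ≫ L = (T : C ⥤ C).map q₂ ≫ T.μ.app I ≫ L) :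
    q₁ ≫ A.rch = q₂ ≫ A.rch := by
  haveI := hq
  obtain ⟨d, hd₁, hd₂⟩ := IsReflexivePair.common_section q₁ q₂
  set r₁ : (T : C ⥤ C).obj S ⟶ (T : C ⥤ C).obj I :=
    (T : C ⥤ C).map q₁ ≫ T.μ.app I with hr₁
  set r₂ : (T : C ⥤ C).obj S ⟶ (T : C ⥤ C).obj I :=
    (T : C ⥤ C).map q₂ ≫ T.μ.app I with hr₂
  have hqr : ∀ q : S ⟶ (T : C ⥤ C).obj I,
      T.η.app S ≫ (T : C ⥤ C).map q ≫ T.μ.app I = q := by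
    intro q
    have nat := T.η.naturality q
    simp only [Functor.id_map] at nat
    rw [← Category.assoc, ← nat, Category.assoc, T.left_unit, Category.comp_id]
  have hsec : ∀ q : S ⟶ (T : C ⥤ C).obj I, d ≫ q = 𝟙 _ →
      (d ≫ T.η.app S) ≫ ((T : C ⥤ C).map q ≫ T.μ.app I) = 𝟙 _ := by
    intro q h
    rw [Category.assoc, hqr q, h]
  have hrefl : IsReflexivePair r₁ r₂ :=
    IsReflexivePair.mk' (d ≫ T.η.app S) (hsec q₁ hd₁) (hsec q₂ hd₂)
  haveI := hrefl
  haveI : HasCoequalizer r₁ r₂ := HasReflexiveCoequalizers.has_coeq r₁ r₂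
  set c : (T : C ⥤ C).obj I ⟶ coequalizer r₁ r₂ := coequalizer.π r₁ r₂ with hcdef
  have hcc : r₁ ≫ c = r₂ ≫ c := coequalizer.condition r₁ r₂
  obtain ⟨hTc⟩ := hT r₁ r₂ c hcc hrefl ⟨coequalizerIsCoequalizer r₁ r₂⟩
  have hcc' : (T : C ⥤ C).map q₁ ≫ T.μ.app I ≫ c
      = (T : C ⥤ C).map q₂ ≫ T.μ.app I ≫ c := by
    simpa only [hr₁, hr₂, Category.assoc] using hcc
  have hqc : q₁ ≫ c = q₂ ≫ c := by
    rw [← hqr q₁, ← hqr q₂, Category.assoc, Category.assoc, Category.assoc,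
      Category.assoc, hcc']
  -- compatibility for the structure map
  have h1 : ∀ q : S ⟶ (T : C ⥤ C).obj I,
      (T : C ⥤ C).map ((T : C ⥤ C).map q ≫ T.μ.app I) ≫ T.μ.app I
        = T.μ.app S ≫ (T : C ⥤ C).map q ≫ T.μ.app I := by
    intro q
    have nat := T.μ.naturality q
    simp only [Functor.comp_map] at nat
    rw [Functor.map_comp, Category.assoc, T.assoc, ← Category.assoc, nat,
      Category.assoc]
  have hw : (T : C ⥤ C).map r₁ ≫ T.μ.app I ≫ c
      = (T : C ⥤ C).map r₂ ≫ T.μ.app I ≫ c := by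
    show (T : C ⥤ C).map ((T : C ⥤ C).map q₁ ≫ T.μ.app I) ≫ T.μ.app I ≫ c
      = (T : C ⥤ C).map ((T : C ⥤ C).map q₂ ≫ T.μ.app I) ≫ T.μ.app I ≫ c
    conv_lhs => rw [← Category.assoc, h1 q₁]
    conv_rhs => rw [← Category.assoc, h1 q₂]
    simp only [Category.assoc]
    rw [hcc']
  set a' : (T : C ⥤ C).obj (coequalizer r₁ r₂) ⟶ coequalizer r₁ r₂ :=
    Cofork.IsColimit.desc hTc (T.μ.app I ≫ c) hw with ha'
  have hca : (T : C ⥤ C).map c ≫ a' = T.μ.app I ≫ c := by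
    simpa using Cofork.IsColimit.π_desc' hTc (T.μ.app I ≫ c) hw
  -- T c and T (T c) are epi
  have epiTc : Epi ((T : C ⥤ C).map c) :=
    ⟨fun u v huv => Cofork.IsColimit.hom_ext hTc (by simpa using huv)⟩
  have hreflT : IsReflexivePair ((T : C ⥤ C).map r₁) ((T : C ⥤ C).map r₂) :=
    IsReflexivePair.mk' ((T : C ⥤ C).map (d ≫ T.η.app S))
      (by rw [← Functor.map_comp, hsec q₁ hd₁, (T : C ⥤ C).map_id])
      (by rw [← Functor.map_comp, hsec q₂ hd₂, (T : C ⥤ C).map_id])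
  obtain ⟨hTTc⟩ := hT ((T : C ⥤ C).map r₁) ((T : C ⥤ C).map r₂) ((T : C ⥤ C).map c)
    (by rw [← Functor.map_comp, ← Functor.map_comp, hcc]) hreflT ⟨hTc⟩
  have epiTTc : Epi ((T : C ⥤ C).map ((T : C ⥤ C).map c)) :=
    ⟨fun u v huv => Cofork.IsColimit.hom_ext hTTc (by simpa using huv)⟩
  -- algebra laws
  have hunit : T.η.app (coequalizer r₁ r₂) ≫ a' = 𝟙 _ := by
    have key : c ≫ T.η.app (coequalizer r₁ r₂) ≫ a' = c := by
      have nat := T.η.naturality c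
      simp only [Functor.id_map] at nat
      rw [← Category.assoc, nat, Category.assoc, hca, ← Category.assoc,
        T.left_unit]
      simp
    rw [← cancel_epi c]
    simp only [Functor.id_obj, Category.comp_id]
    exact key
  have hassoc : T.μ.app (coequalizer r₁ r₂) ≫ a' = (T : C ⥤ C).map a' ≫ a' := by
    haveI := epiTTc
    rw [← cancel_epi ((T : C ⥤ C).map ((T : C ⥤ C).map c))]
    have nat := T.μ.naturality c
    simp only [Functor.comp_map] at nat
    conv_lhs => rw [← Category.assoc, nat, Category.assoc, hca]
    conv_rhs => rw [← Functor.map_comp_assoc, hca, Functor.map_comp_assoc, hca,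
      ← Category.assoc, T.assoc, Category.assoc]
  -- output map
  have hLcond : r₁ ≫ L = r₂ ≫ L := by
    rw [hr₁, hr₂]
    simp only [Category.assoc]
    exact hLq
  set o' : coequalizer r₁ r₂ ⟶ O := coequalizer.desc L hLcond with ho'
  have hco : c ≫ o' = L := coequalizer.π_desc L hLcond
  -- the automaton B
  set Q' : T.Algebra := ⟨coequalizer r₁ r₂, a', hunit, hassoc⟩ with hQ'
  set B : TAut T I O := ⟨Q', T.η.app I ≫ c, o'⟩ with hB
  have hBrch : B.rch = c := by
    rw [rch_eq]
    show (T : C ⥤ C).map (T.η.app I ≫ c) ≫ a' = c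
    rw [Functor.map_comp, Category.assoc, hca, ← Category.assoc, T.right_unit,
      Category.id_comp]
  have hBreach : B.Reachable := by
    refine ⟨(T : C ⥤ C).obj S, r₁, r₂, hrefl, ?_⟩
    rw [hBrch]
    exact ⟨hcc, ⟨coequalizerIsCoequalizer r₁ r₂⟩⟩
  have hBlang : B.lang = A.lang := by
    have : B.lang = c ≫ o' := by rw [TAut.lang, hBrch]
    rw [this, hco, hL]
  obtain ⟨h, hh, -⟩ := hA.2 B hBreach hBlang
  have hi' : (T.η.app I ≫ c) ≫ h = A.i := hh.hi
  have halg : (T : C ⥤ C).map h ≫ A.Q.a = a' ≫ h := hh.alg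
  have hch : c ≫ h = A.rch := by
    rw [rch_eq, ← hi']
    simp only [Functor.map_comp, Category.assoc]
    rw [halg, reassoc_of% hca, ← Category.assoc, T.right_unit]
    simp
  rw [← hch, ← Category.assoc, ← Category.assoc, hqc]


/-- If `C` has kernel pairs and reflexive coequalisers and `T`
preserves reflexive coequalisers, then every language accepted by a minimal
`T`-automaton has a Nerode equivalence; indeed, the kernel pair of the reachability
map of the minimal automaton is the Nerode equivalence. -/
theorem nerode_exists_of_minimal
    {C : Type u} [Category.{v} C] [HasReflexiveCoequalizers C]
    (hkp : ∀ {X Y : C} (f : X ⟶ Y), HasPullback f f)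
    (T : Monad C) (hT : PreservesReflexiveCoequalizersProp (T : C ⥤ C))
    {I O : C} (L : (T : C ⥤ C).obj I ⟶ O)
    (A : TAut T I O) (hA : A.Minimal) (hL : A.lang = L) :
    (∀ (K : C) (p₁ p₂ : K ⟶ (T : C ⥤ C).obj I),
      IsKernelPair A.rch p₁ p₂ → IsNerode T L K p₁ p₂) ∧
    (∃ (K : C) (p₁ p₂ : K ⟶ (T : C ⥤ C).obj I),
      IsKernelPair A.rch p₁ p₂ ∧ IsNerode T L K p₁ p₂) := by
  have part1 : ∀ (K : C) (p₁ p₂ : K ⟶ (T : C ⥤ C).obj I),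
      IsKernelPair A.rch p₁ p₂ → IsNerode T L K p₁ p₂ := by
    intro K p₁ p₂ hK
    have helper : ∀ {K' : C} (p : K' ⟶ (T : C ⥤ C).obj I),
        (T : C ⥤ C).map p ≫ T.μ.app I ≫ A.rch
          = (T : C ⥤ C).map (p ≫ A.rch) ≫ A.Q.a := by
      intro K' p
      rw [Functor.map_comp, Category.assoc, rch_alg]
    constructor
    · rw [← hL]
      show (T : C ⥤ C).map p₁ ≫ T.μ.app I ≫ A.rch ≫ A.o
        = (T : C ⥤ C).map p₂ ≫ T.μ.app I ≫ A.rch ≫ A.o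
      rw [reassoc_of% (helper p₁), reassoc_of% (helper p₂), hK.w]
    · intro S q₁ q₂ hq hLq
      have hmerge : q₁ ≫ A.rch = q₂ ≫ A.rch := key hT A hA hL q₁ q₂ hq hLq
      refine ⟨hK.lift q₁ q₂ hmerge, ⟨hK.lift_fst q₁ q₂ hmerge, hK.lift_snd q₁ q₂ hmerge⟩, ?_⟩
      rintro u ⟨hu₁, hu₂⟩
      exact hK.hom_ext (by rw [hu₁, hK.lift_fst]) (by rw [hu₂, hK.lift_snd])
  haveI := hkp A.rch
  have hpb : IsKernelPair A.rch (pullback.fst A.rch A.rch) (pullback.snd A.rch A.rch) :=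
    IsPullback.of_hasPullback A.rch A.rch
  exact ⟨part1, ⟨_, _, _, hpb, part1 _ _ _ hpb⟩⟩


end TreeAutPaper
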